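/- For any unit vector v ∈ ℝ³ and angle θ ∈ ℝ, the matrix exponential of θv̂ equals I + sin(θ) v̂ + (1 − cos θ) v̂² (Rodrigues' formula). -/

import Mathlib

open Matrix Real

noncomputable def hat (v : Fin 3 → ℝ) : Matrix (Fin 3) (Fin 3) ℝ :=
  !![0, -v 2, v 1; v 2, 0, -v 0; -v 1, v 0, 0]

noncomputable def vee (A : Matrix (Fin 3) (Fin 3) ℝ) : Fin 3 → ℝ := ![A 2 1, A 0 2, A 1 0]

/-- Frobenius norm of a 3×3 real matrix: ‖A‖ = √(tr(Aᵀ A)). -/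
noncomputable def fnorm (A : Matrix (Fin 3) (Fin 3) ℝ) : ℝ := Real.sqrt ((Aᵀ * A).trace)

/-- Euclidean norm on ℝ³. -/
noncomputable def enorm (v : Fin 3 → ℝ) : ℝ := Real.sqrt (v ⬝ᵥ v)

/-- The special orthogonal group SO(3). -/
def SO3 (R : Matrix (Fin 3) (Fin 3) ℝ) : Prop := Rᵀ * R = 1 ∧ R.det = 1

lemma hat_cube (v : Fin 3 → ℝ) (h : v 0 ^ 2 + v 1 ^ 2 + v 2 ^ 2 = 1) :
    hat v * hat v * hat v = -(hat v) := by
  have e : -(hat v) = !![0, v 2, -v 1; -v 2, 0, v 0; v 1, -v 0, 0] := by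
    ext i j; fin_cases i <;> fin_cases j <;> simp [hat]
  rw [e]
  simp only [hat, Matrix.mul_fin_three, ← Matrix.ext_iff, Fin.forall_fin_succ,
    Fin.forall_fin_zero_pi]
  norm_num [Matrix.cons_val', Matrix.cons_val_zero, Matrix.cons_val_one, Matrix.head_cons,
    Matrix.empty_val', Matrix.cons_val_fin_one, Matrix.head_fin_const, Matrix.of_apply,
    Fin.succ_zero_eq_one, Fin.succ_one_eq_two, Matrix.cons_val, Matrix.cons_val_two, Matrix.tail_cons]
  repeat' constructor
  all_goals
    first
      | ring1
      | linear_combination v 0 * h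
      | linear_combination (-v 0) * h
      | linear_combination v 1 * h
      | linear_combination (-v 1) * h
      | linear_combination v 2 * h
      | linear_combination (-v 2) * h

lemma hat_odd (v : Fin 3 → ℝ) (h : hat v * hat v * hat v = -(hat v)) (k : ℕ) :
    hat v ^ (2 * k + 1) = ((-1 : ℝ) ^ k) • hat v := by
  induction k with
  | zero => simp
  | succ k ih =>
    have : 2 * (k + 1) + 1 = (2 * k + 1) + 2 := by ring
    rw [this, pow_add, ih, pow_two, smul_mul_assoc, ← mul_assoc, h]
    rw [pow_succ]
    simp [smul_smul]

lemma hat_even (v : Fin 3 → ℝ) (h : hat v * hat v * hat v = -(hat v)) (k : ℕ) :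
    hat v ^ (2 * (k + 1)) = ((-1 : ℝ) ^ k) • (hat v * hat v) := by
  have : 2 * (k + 1) = (2 * k + 1) + 1 := by ring
  rw [this, pow_succ, hat_odd v h k, smul_mul_assoc]

theorem rodrigues_formula (θ : ℝ) (v : Fin 3 → ℝ) (hv : _root_.enorm v = 1) :
    NormedSpace.exp (θ • hat v) =
      1 + Real.sin θ • hat v + (1 - Real.cos θ) • (hat v * hat v) := by
  have hsq : v 0 ^ 2 + v 1 ^ 2 + v 2 ^ 2 = 1 := by
    have h1 : v ⬝ᵥ v = 1 := Real.sqrt_eq_one.mp hv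
    simpa [dotProduct, Fin.sum_univ_three, pow_two] using h1
  have h3 := hat_cube v hsq
  set K := hat v with hK
  have hexp : NormedSpace.exp (θ • K) = ∑' n : ℕ, (θ ^ n / n.factorial) • K ^ n := by
    rw [NormedSpace.exp_eq_tsum (𝕂 := ℝ)]
    exact tsum_congr fun n => by rw [smul_pow, smul_smul, div_eq_inv_mul, mul_comm]
  rw [hexp]
  -- even part
  have heven : HasSum (fun k : ℕ => (θ ^ (2 * k) / (2 * k).factorial) • K ^ (2 * k))
      (1 + (1 - Real.cos θ) • (K * K)) := by
    have hcos := Real.hasSum_cos θ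
    have hcos1 : HasSum
        (fun k : ℕ => (-1 : ℝ) ^ (k + 1) * θ ^ (2 * (k + 1)) / ((2 * (k + 1)).factorial))
        (Real.cos θ - 1) :=
      (hasSum_nat_add_iff
        (f := fun n : ℕ => (-1 : ℝ) ^ n * θ ^ (2 * n) / ((2 * n).factorial))
        (g := Real.cos θ - 1) 1).mpr (by simpa using hcos)
    have hc2 : HasSum
        (fun k : ℕ => ((-1 : ℝ) ^ k * θ ^ (2 * (k + 1)) / ((2 * (k + 1)).factorial)))
        (1 - Real.cos θ) := by
      have h' := hcos1.neg
      rw [neg_sub] at h'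
      have e : (fun k : ℕ => -((-1 : ℝ) ^ (k + 1) * θ ^ (2 * (k + 1)) / ((2 * (k + 1)).factorial)))
          = fun k : ℕ => (-1 : ℝ) ^ k * θ ^ (2 * (k + 1)) / ((2 * (k + 1)).factorial) := by
        funext k; ring
      rwa [e] at h'
    have hshift : HasSum
        (fun k : ℕ => (θ ^ (2 * (k + 1)) / (2 * (k + 1)).factorial) • K ^ (2 * (k + 1)))
        ((1 - Real.cos θ) • (K * K)) := by
      have hsm := hc2.smul_const (K * K)
      convert hsm using 2 with k
      rw [hat_even v h3 k, smul_smul]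
      congr 1
      ring
    have key := (hasSum_nat_add_iff
      (f := fun n : ℕ => (θ ^ (2 * n) / (2 * n).factorial) • K ^ (2 * n))
      (g := (1 - Real.cos θ) • (K * K)) 1).mp hshift
    have e0 : ∑ i ∈ Finset.range 1,
        (θ ^ (2 * i) / (((2 * i).factorial : ℕ) : ℝ)) • K ^ (2 * i) = 1 := by
      norm_num
    rw [e0, add_comm] at key
    exact key
  -- odd part
  have hodd : HasSum (fun k : ℕ => (θ ^ (2 * k + 1) / (2 * k + 1).factorial) • K ^ (2 * k + 1))
      (Real.sin θ • K) := by
    have hsin := (Real.hasSum_sin θ).smul_const K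
    convert hsin using 2 with k
    rw [hat_odd v h3 k, smul_smul]
    congr 1
    ring
  have htotal := HasSum.even_add_odd
    (f := fun n : ℕ => (θ ^ n / n.factorial) • K ^ n) heven hodd
  rw [htotal.tsum_eq]
  abel
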